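/- Let m be a positive integer and let 2 ≤ n ≤ (√3/√2)^{m-1}. Then there exists a coloring c: [n]² → {1,2,3} of the unordered pairs of {1,...,n} with 3 colors such that no subset of {1,...,n} of size ≥ m is ≤2-chromatic (i.e., such that c restricted to the pairs of any m-element subset takes all three colors). -/

import Mathlib

/-- A subset `A` is `≤2`-chromatic for a coloring `c` of unordered pairs if `c`
takes at most two distinct values on pairs of distinct elements of `A`. -/
def LeTwoChromatic {n : ℕ} (c : Sym2 (Fin n) → Fin 3) (A : Finset (Fin n)) : Prop :=
  ∃ i j : Fin 3, ∀ x ∈ A, ∀ y ∈ A, x ≠ y → c s(x, y) = i ∨ c s(x, y) = j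

open Finset

lemma leTwoChromatic_mono {n : ℕ} {c : Sym2 (Fin n) → Fin 3} {A B : Finset (Fin n)}
    (hBA : B ⊆ A) (h : LeTwoChromatic c A) : LeTwoChromatic c B := by
  obtain ⟨i, j, H⟩ := h
  exact ⟨i, j, fun x hx y hy => H x (hBA hx) y (hBA hy)⟩

lemma exists_avoid (i j : Fin 3) : ∃ k : Fin 3, k ≠ i ∧ k ≠ j := by
  revert i j; decide

/-- two consecutive numbers multiply to twice a binomial coefficient -/
lemma two_mul_choose_two (m : ℕ) (hm : 1 ≤ m) : (m - 1) * m = 2 * m.choose 2 := by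
  rw [Nat.choose_two_right]
  have he : 2 ∣ m * (m - 1) := (Nat.even_mul_pred_self m).two_dvd
  rw [Nat.mul_div_cancel' he, Nat.mul_comm]

/-- If `2 ≤ n ≤ (√3/√2)^(m-1)`, there is a 3-coloring of the unordered pairs of `{1,…,n}`
with no `≤2`-chromatic set of size `≥ m`. -/
theorem stmt3 (m n : ℕ) (hm : 1 ≤ m) (hn : 2 ≤ n)
    (hbound : (n : ℝ) ≤ (Real.sqrt 3 / Real.sqrt 2) ^ (m - 1)) :
    ∃ c : Sym2 (Fin n) → Fin 3,
      ∀ A : Finset (Fin n), m ≤ A.card → ¬ LeTwoChromatic c A := by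
  classical
  -- First, `m ≥ 3`.
  have hm3 : 3 ≤ m := by
    by_contra h
    push_neg at h
    have hlt : (Real.sqrt 3 / Real.sqrt 2) ^ (m - 1) < 2 := by
      interval_cases m
      · norm_num
      · rw [show 2 - 1 = 1 from rfl, pow_one]
        have h1 : Real.sqrt 3 < 2 := by
          rw [show (2:ℝ) = Real.sqrt 4 by rw [show (4:ℝ) = 2^2 by norm_num, Real.sqrt_sq]; norm_num]
          exact Real.sqrt_lt_sqrt (by norm_num) (by norm_num)
        have h2 : (1:ℝ) ≤ Real.sqrt 2 := by
          rw [show (1:ℝ) = Real.sqrt 1 by simp]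
          exact Real.sqrt_le_sqrt (by norm_num)
        calc Real.sqrt 3 / Real.sqrt 2 ≤ Real.sqrt 3 / 1 := by
              apply div_le_div_of_nonneg_left (Real.sqrt_nonneg 3) (by norm_num) h2
          _ = Real.sqrt 3 := by ring
          _ < 2 := h1
    have : (n : ℝ) < 2 := lt_of_le_of_lt hbound hlt
    have : (2 : ℝ) ≤ (n : ℝ) := by exact_mod_cast hn
    linarith
  set p := m.choose 2 with hp
  set T := Fintype.card (Sym2 (Fin n)) with hT
  -- Key arithmetic inequality
  have key : 3 * n.choose m * 2 ^ p < 3 ^ p := by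
    have hfac : (0:ℝ) < (m.factorial : ℝ) := by exact_mod_cast m.factorial_pos
    rw [← Nat.cast_lt (α := ℝ)]
    push_cast
    rw [← mul_lt_mul_iff_of_pos_right hfac]
    have h1 : (n.choose m : ℝ) * m.factorial ≤ (n : ℝ) ^ m := by
      have h2 : n.choose m * m.factorial ≤ n ^ m := by
        rw [Nat.mul_comm, ← Nat.descFactorial_eq_factorial_mul_choose]
        exact Nat.descFactorial_le_pow n m
      exact_mod_cast h2
    have h2 : (n : ℝ) ^ m ≤ (3 / 2 : ℝ) ^ p := by
      have hb : (0:ℝ) ≤ (n:ℝ) := Nat.cast_nonneg n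
      have hpow : (n : ℝ) ^ m ≤ ((Real.sqrt 3 / Real.sqrt 2) ^ (m - 1)) ^ m :=
        pow_le_pow_left₀ hb hbound m
      have hsq : (Real.sqrt 3 / Real.sqrt 2) ^ 2 = 3 / 2 := by
        rw [div_pow, Real.sq_sqrt (by norm_num : (3:ℝ) ≥ 0), Real.sq_sqrt (by norm_num : (2:ℝ) ≥ 0)]
      calc (n : ℝ) ^ m ≤ ((Real.sqrt 3 / Real.sqrt 2) ^ (m - 1)) ^ m := hpow
        _ = (Real.sqrt 3 / Real.sqrt 2) ^ ((m - 1) * m) := by rw [← pow_mul]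
        _ = (Real.sqrt 3 / Real.sqrt 2) ^ (2 * p) := by rw [two_mul_choose_two m hm]
        _ = ((Real.sqrt 3 / Real.sqrt 2) ^ 2) ^ p := by rw [pow_mul]
        _ = (3 / 2 : ℝ) ^ p := by rw [hsq]
    have h6 : (6 : ℝ) ≤ (m.factorial : ℝ) := by
      have : Nat.factorial 3 ≤ Nat.factorial m := Nat.factorial_le hm3
      simpa [Nat.factorial] using (by exact_mod_cast this : (6:ℝ) ≤ (m.factorial : ℝ))
    have h3p : (0:ℝ) < (3:ℝ) ^ p := by positivity
    calc (3 : ℝ) * n.choose m * 2 ^ p * m.factorial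
        = 3 * ((n.choose m : ℝ) * m.factorial) * 2 ^ p := by ring
      _ ≤ 3 * (n:ℝ)^m * 2^p := by
          have := mul_le_mul_of_nonneg_left h1 (by norm_num : (0:ℝ) ≤ 3)
          nlinarith [pow_pos (show (0:ℝ) < 2 by norm_num) p]
      _ ≤ 3 * (3/2:ℝ)^p * 2^p := by
          have := mul_le_mul_of_nonneg_left h2 (by norm_num : (0:ℝ) ≤ 3)
          nlinarith [pow_pos (show (0:ℝ) < 2 by norm_num) p]
      _ = 3 * 3^p := by rw [mul_assoc, ← mul_pow]; norm_num
      _ < m.factorial * 3^p := by nlinarith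
      _ = 3^p * m.factorial := by ring
  -- the set of colorings admitting a ≤2-chromatic m-set
  set Bad : Finset (Sym2 (Fin n) → Fin 3) :=
    univ.filter (fun c => ∃ A : Finset (Fin n), A.card = m ∧ LeTwoChromatic c A) with hBadDef
  have hsub : Bad ⊆ (univ.powersetCard m).biUnion
      (fun A => (univ : Finset (Fin 3)).biUnion (fun k =>
        Fintype.piFinset (fun e =>
          if e ∈ A.offDiag.image (Function.uncurry Sym2.mk) then ({k}ᶜ : Finset (Fin 3)) else univ))) := by
    intro c hc
    rw [hBadDef, mem_filter] at hc
    obtain ⟨-, A, hAcard, i, j, hij⟩ := hc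
    obtain ⟨k, hki, hkj⟩ := exists_avoid i j
    refine mem_biUnion.2 ⟨A, mem_powersetCard.2 ⟨subset_univ A, hAcard⟩,
      mem_biUnion.2 ⟨k, mem_univ k, Fintype.mem_piFinset.2 ?_⟩⟩
    intro e
    by_cases he : e ∈ A.offDiag.image (Function.uncurry Sym2.mk)
    · rw [if_pos he]
      obtain ⟨⟨x, y⟩, hxy, rfl⟩ := mem_image.1 he
      obtain ⟨hx, hy, hne⟩ := Finset.mem_offDiag.1 hxy
      rw [mem_compl, mem_singleton, Function.uncurry_apply_pair]
      rcases hij x hx y hy hne with h | h <;> rw [h]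
      · exact fun hh => hki hh.symm
      · exact fun hh => hkj hh.symm
    · rw [if_neg he]; exact mem_univ _
  have hDcard : ∀ (A : Finset (Fin n)) (k : Fin 3), A.card = m →
      (Fintype.piFinset (fun e =>
        if e ∈ A.offDiag.image (Function.uncurry Sym2.mk) then ({k}ᶜ : Finset (Fin 3)) else univ)).card
        = 2 ^ p * 3 ^ (T - p) := by
    intro A k hA
    set S := A.offDiag.image (Function.uncurry Sym2.mk) with hS
    have hScard : S.card = p := by rw [hS, Sym2.card_image_offDiag, hA]
    rw [Fintype.card_piFinset]
    have hval : ∀ e : Sym2 (Fin n),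
        ((if e ∈ S then ({k}ᶜ : Finset (Fin 3)) else univ)).card
        = if e ∈ S then 2 else 3 := by
      intro e
      split
      · rw [Finset.card_compl, Finset.card_singleton, Fintype.card_fin]
      · rw [Finset.card_univ, Fintype.card_fin]
    simp_rw [hval]
    rw [← Finset.prod_sdiff (Finset.subset_univ S)]
    rw [Finset.prod_congr rfl (fun e he => if_neg (Finset.mem_sdiff.1 he).2),
        Finset.prod_congr rfl (fun e he => if_pos he)]
    rw [Finset.prod_const, Finset.prod_const, Finset.card_sdiff_of_subset (Finset.subset_univ S),
        Finset.card_univ, hScard]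
    ring
  have hBadcard : Bad.card < 3 ^ T := by
    have h1 : Bad.card ≤ n.choose m * (3 * (2 ^ p * 3 ^ (T - p))) := by
      refine (Finset.card_le_card hsub).trans ?_
      refine Finset.card_biUnion_le.trans ?_
      have hinner : ∀ A ∈ (univ : Finset (Fin n)).powersetCard m,
          ((univ : Finset (Fin 3)).biUnion (fun k =>
            Fintype.piFinset (fun e =>
              if e ∈ A.offDiag.image (Function.uncurry Sym2.mk) then ({k}ᶜ : Finset (Fin 3)) else univ))).card
          ≤ 3 * (2 ^ p * 3 ^ (T - p)) := by
        intro A hA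
        obtain ⟨-, hAcard⟩ := mem_powersetCard.1 hA
        refine Finset.card_biUnion_le.trans ?_
        rw [Finset.sum_congr rfl (fun k _ => hDcard A k hAcard), Finset.sum_const,
          Finset.card_univ, Fintype.card_fin, smul_eq_mul]
      refine (Finset.sum_le_sum hinner).trans ?_
      rw [Finset.sum_const, smul_eq_mul, Finset.card_powersetCard, Finset.card_univ,
        Fintype.card_fin]
    refine lt_of_le_of_lt h1 ?_
    rcases le_or_gt m n with hmn | hmn
    · have hpT : p ≤ T := by
        rw [hp, hT, Sym2.card, Fintype.card_fin]
        exact Nat.choose_le_choose 2 (by omega)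
      calc n.choose m * (3 * (2 ^ p * 3 ^ (T - p)))
          = (3 * n.choose m * 2 ^ p) * 3 ^ (T - p) := by ring
        _ < 3 ^ p * 3 ^ (T - p) :=
            Nat.mul_lt_mul_of_lt_of_le key (le_refl _) (Nat.pow_pos (by norm_num))
        _ = 3 ^ T := by rw [← pow_add, Nat.add_sub_cancel' hpT]
    · rw [Nat.choose_eq_zero_of_lt hmn, Nat.zero_mul]
      exact Nat.pow_pos (by norm_num)
  obtain ⟨c, hc⟩ : ∃ c, c ∉ Bad := by
    by_contra h
    push_neg at h
    have hsub2 : (univ : Finset (Sym2 (Fin n) → Fin 3)) ⊆ Bad := fun c _ => h c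
    have h2 := Finset.card_le_card hsub2
    rw [Finset.card_univ, Fintype.card_fun, Fintype.card_fin, ← hT] at h2
    omega
  refine ⟨c, fun A hA hLe => ?_⟩
  obtain ⟨B, hBA, hB⟩ := Finset.exists_subset_card_eq hA
  apply hc
  rw [hBadDef, mem_filter]
  exact ⟨mem_univ _, B, hB, leTwoChromatic_mono hBA hLe⟩
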